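/- arXiv:math-ph/0309044 — 4 statements merged into one kernel-verified Lean document; each statement's English description precedes it below -/
import Mathlib

section
/- Suppose S and T are bounded operators on H satisfying the symplectic relations. Then S*S ≥ 1 and SS* ≥ 1; in particular S is bijective with bounded inverse S⁻¹ and ‖S⁻¹‖ ≤ 1. -/
noncomputable section

open ContinuousLinearMap Filter
open scoped Topology

/-- `conj ∘ conj = id` as a `RingHomCompTriple`, so that conjugate-linear maps compose. -/
instance : RingHomCompTriple (starRingEnd ℂ) (starRingEnd ℂ) (RingHom.id ℂ) :=
  ⟨RingHom.ext fun z => Complex.conj_conj z⟩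

variable {H : Type*} [NormedAddCommGroup H] [InnerProductSpace ℂ H] [CompleteSpace H]

/-- For a conjugation `Γ` (a conjugate-linear isometric involution) and a bounded operator `X`,
the operator `X̄ = Γ ∘ X ∘ Γ`. -/
def conjOp (Γ : H →ₛₗᵢ[starRingEnd ℂ] H) (X : H →L[ℂ] H) : H →L[ℂ] H :=
  Γ.toContinuousLinearMap.comp (X.comp Γ.toContinuousLinearMap)

/-- The Hilbert space direct sum `H ⊕ H`. -/
abbrev H2 (H : Type*) [NormedAddCommGroup H] [InnerProductSpace ℂ H] : Type _ :=
  WithLp 2 (H × H)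

/-- The element `(φ, ψ)` of `H ⊕ H`. -/
def mk2 (φ ψ : H) : H2 H := (WithLp.equiv 2 (H × H)).symm (φ, ψ)

/-- The inclusion `f ↦ (f, 0)` of `H` into `H ⊕ H`. -/
def inc1 : H →L[ℂ] H2 H :=
  (WithLp.prodContinuousLinearEquiv 2 ℂ H H).symm.toContinuousLinearMap.comp
    (ContinuousLinearMap.inl ℂ H H)

/-- The inclusion `f ↦ (0, f)` of `H` into `H ⊕ H`. -/
def inc2 : H →L[ℂ] H2 H :=
  (WithLp.prodContinuousLinearEquiv 2 ℂ H H).symm.toContinuousLinearMap.comp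
    (ContinuousLinearMap.inr ℂ H H)

/-- The projection `(φ, ψ) ↦ φ` of `H ⊕ H` onto the first coordinate. -/
def proj1 : H2 H →L[ℂ] H :=
  (ContinuousLinearMap.fst ℂ H H).comp
    (WithLp.prodContinuousLinearEquiv 2 ℂ H H).toContinuousLinearMap

/-- The projection `(φ, ψ) ↦ ψ` of `H ⊕ H` onto the second coordinate. -/
def proj2 : H2 H →L[ℂ] H :=
  (ContinuousLinearMap.snd ℂ H H).comp
    (WithLp.prodContinuousLinearEquiv 2 ℂ H H).toContinuousLinearMap

/-- The block `B₁₁ f = P₁ B (f, 0)` of an operator `B` on `H ⊕ H`. -/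
def blk11 (B : H2 H →L[ℂ] H2 H) : H →L[ℂ] H := proj1.comp (B.comp inc1)

/-- The block `B₂₁ f = P₂ B (f, 0)` of an operator `B` on `H ⊕ H`. -/
def blk21 (B : H2 H →L[ℂ] H2 H) : H →L[ℂ] H := proj2.comp (B.comp inc1)

/-- The block `B₁₂ f = P₁ B (0, f)` of an operator `B` on `H ⊕ H`. -/
def blk12 (B : H2 H →L[ℂ] H2 H) : H →L[ℂ] H := proj1.comp (B.comp inc2)

/-- The block `B₂₂ f = P₂ B (0, f)` of an operator `B` on `H ⊕ H`. -/
def blk22 (B : H2 H →L[ℂ] H2 H) : H →L[ℂ] H := proj2.comp (B.comp inc2)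

/-- `X` is Hilbert–Schmidt with respect to the Hilbert basis `b`. -/
def IsHS {E : Type*} [NormedAddCommGroup E] [InnerProductSpace ℂ E] {ι : Type*}
    (b : HilbertBasis ι ℂ E) (X : E →L[ℂ] E) : Prop :=
  Summable fun i => ‖X (b i)‖ ^ 2

/-- The Hilbert–Schmidt norm `‖X‖₂ = (∑ᵢ ‖X eᵢ‖²)^{1/2}` with respect to the Hilbert basis `b`. -/
def hsNorm {E : Type*} [NormedAddCommGroup E] [InnerProductSpace ℂ E] {ι : Type*}
    (b : HilbertBasis ι ℂ E) (X : E →L[ℂ] E) : ℝ :=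
  Real.sqrt (∑' i, ‖X (b i)‖ ^ 2)

/-- The symplectic relations for the pair `(S, T)` relative to the conjugation `Γ`:
`S*S − T*T = 1`, `S̄*T − T̄*S = 0`, `SS* − (TT*)‾ = 1`, `TS* − (ST*)‾ = 0`. -/
def SympRel (Γ : H →ₛₗᵢ[starRingEnd ℂ] H) (S T : H →L[ℂ] H) : Prop :=
  adjoint S ∘L S - adjoint T ∘L T = 1 ∧
  adjoint (conjOp Γ S) ∘L T - adjoint (conjOp Γ T) ∘L S = 0 ∧
  S ∘L adjoint S - conjOp Γ (T ∘L adjoint T) = 1 ∧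
  T ∘L adjoint S - conjOp Γ (S ∘L adjoint T) = 0

local notation "⟪" x ", " y "⟫" => @inner ℂ _ _ x y

omit [CompleteSpace H] in
lemma Gamma_inner (Γ : H →ₛₗᵢ[starRingEnd ℂ] H) (x y : H) : ⟪Γ x, Γ y⟫ = ⟪y, x⟫ := by
  rw [← inner_conj_symm y x]
  rw [inner_eq_sum_norm_sq_div_four (Γ x) (Γ y), inner_eq_sum_norm_sq_div_four x y]
  have hI : (RCLike.I : ℂ) = Complex.I := rfl
  have h1 : Γ x + Γ y = Γ (x + y) := (map_add Γ x y).symm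
  have h2 : Γ x - Γ y = Γ (x - y) := (map_sub Γ x y).symm
  have h3 : Γ x - Complex.I • Γ y = Γ (x + Complex.I • y) := by
    rw [map_add, map_smulₛₗ]; simp [Complex.conj_I, sub_eq_add_neg, neg_smul]
  have h4 : Γ x + Complex.I • Γ y = Γ (x - Complex.I • y) := by
    rw [map_sub, map_smulₛₗ]; simp [Complex.conj_I, sub_eq_add_neg, neg_smul]
  rw [hI, h1, h2, h3, h4, Γ.norm_map, Γ.norm_map, Γ.norm_map, Γ.norm_map]
  simp only [map_div₀, map_add, map_sub, map_mul, map_pow, Complex.conj_I,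
    RCLike.conj_ofReal, map_ofNat]
  ring

omit [CompleteSpace H] in
lemma conjOp_apply (Γ : H →ₛₗᵢ[starRingEnd ℂ] H) (X : H →L[ℂ] H) (x : H) :
    conjOp Γ X x = Γ (X (Γ x)) := rfl

lemma conjOp_isPositive (Γ : H →ₛₗᵢ[starRingEnd ℂ] H) (hΓ : ∀ x, Γ (Γ x) = x)
    (A : H →L[ℂ] H) (hA : A.IsPositive) : (conjOp Γ A).IsPositive := by
  have key : ∀ x y, ⟪conjOp Γ A x, y⟫ = ⟪x, conjOp Γ A y⟫ := by
    intro x y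
    have h1 : ⟪conjOp Γ A x, y⟫ = ⟪Γ (A (Γ x)), Γ (Γ y)⟫ := by rw [hΓ y]; rfl
    rw [h1, Gamma_inner, ← adjoint_inner_left, hA.isSelfAdjoint.adjoint_eq,
      ← hΓ (A (Γ y)), Gamma_inner, conjOp_apply]
  constructor
  · exact fun x y => key x y
  · intro x
    have h1 : ⟪conjOp Γ A x, x⟫ = ⟪Γ (A (Γ x)), Γ (Γ x)⟫ := by rw [hΓ x]; rfl
    have h2 : reApplyInnerSelf (conjOp Γ A) x = (A.reApplyInnerSelf (Γ x)) := by
      unfold ContinuousLinearMap.reApplyInnerSelf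
      rw [h1, Gamma_inner]
      exact inner_re_symm _ _
    rw [h2]; exact hA.2 (Γ x)

theorem stmt1aux (Γ : H →ₛₗᵢ[starRingEnd ℂ] H) (hΓ : ∀ x, Γ (Γ x) = x)
    (S T : H →L[ℂ] H)
    (h1 : adjoint S ∘L S - adjoint T ∘L T = 1)
    (h3 : S ∘L adjoint S - conjOp Γ (T ∘L adjoint T) = 1) :
    (adjoint S ∘L S - 1).IsPositive ∧ (S ∘L adjoint S - 1).IsPositive ∧
      ∃ Sinv : H →L[ℂ] H, Sinv ∘L S = 1 ∧ S ∘L Sinv = 1 ∧ ‖Sinv‖ ≤ 1 := by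
  have e1 : adjoint S ∘L S - 1 = adjoint T ∘L T := by rw [← h1]; abel
  have e3 : S ∘L adjoint S - 1 = conjOp Γ (T ∘L adjoint T) := by rw [← h3]; abel
  have pTT : (adjoint T ∘L T).IsPositive := by
    have := isPositive_one.adjoint_conj T
    simpa [one_def, id_comp] using this
  have pTT' : (T ∘L adjoint T).IsPositive := by
    have := isPositive_one.conj_adjoint T
    simpa [one_def, id_comp] using this
  have P1 : (adjoint S ∘L S - 1).IsPositive := e1 ▸ pTT
  have P2 : (S ∘L adjoint S - 1).IsPositive := e3 ▸ conjOp_isPositive Γ hΓ _ pTT'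
  refine ⟨P1, P2, ?_⟩
  -- norm bounds
  have hb : ∀ x : H, ‖x‖ ≤ ‖S x‖ := by
    intro x
    have h := P1.2 x
    have : reApplyInnerSelf (adjoint S ∘L S - 1) x
        = ‖S x‖ ^ 2 - ‖x‖ ^ 2 := by
      unfold ContinuousLinearMap.reApplyInnerSelf
      simp only [sub_apply, comp_apply, one_apply, inner_sub_left, Complex.sub_re,
        adjoint_inner_left]
      rw [← @inner_self_eq_norm_sq ℂ, ← @inner_self_eq_norm_sq ℂ]
      rfl
    rw [this] at h
    nlinarith [norm_nonneg x, norm_nonneg (S x)]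
  have hb' : ∀ x : H, ‖x‖ ≤ ‖adjoint S x‖ := by
    intro x
    have h := P2.2 x
    have : reApplyInnerSelf (S ∘L adjoint S - 1) x
        = ‖adjoint S x‖ ^ 2 - ‖x‖ ^ 2 := by
      unfold ContinuousLinearMap.reApplyInnerSelf
      simp only [sub_apply, comp_apply, one_apply, inner_sub_left]
      rw [← adjoint_inner_right]
      simp [map_sub, inner_self_eq_norm_sq]
      norm_cast
    rw [this] at h
    nlinarith [norm_nonneg x, norm_nonneg (adjoint S x)]
  -- injectivity and closed range
  have hanti : AntilipschitzWith 1 S :=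
    AddMonoidHomClass.antilipschitz_of_bound S (fun x => by simpa using hb x)
  have hclosed : IsClosed (Set.range S) := hanti.isClosed_range S.uniformContinuous
  have hker : LinearMap.ker (S : H →ₗ[ℂ] H) = ⊥ := by
    rw [LinearMap.ker_eq_bot']
    intro x hx
    have := hb x
    rw [show S x = 0 from hx] at this; simpa using norm_le_zero_iff.mp (by simpa using this)
  have hrange : LinearMap.range (S : H →ₗ[ℂ] H) = ⊤ := by
    have hcl : IsClosed ((LinearMap.range (S : H →ₗ[ℂ] H) : Submodule ℂ H) : Set H) := by
      simpa [LinearMap.coe_range] using hclosed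
    have : CompleteSpace (LinearMap.range (S : H →ₗ[ℂ] H) : Submodule ℂ H) := hcl.completeSpace_coe
    rw [← Submodule.orthogonal_eq_bot_iff]
    rw [Submodule.eq_bot_iff]
    intro x hx
    have hSx : adjoint S x = 0 := by
      have : ∀ u : H, ⟪u, adjoint S x⟫ = 0 := by
        intro u
        rw [adjoint_inner_right]
        exact (Submodule.mem_orthogonal _ x).mp hx (S u) ⟨u, rfl⟩
      have := this (adjoint S x)
      rwa [inner_self_eq_zero] at this
    have := hb' x
    rw [hSx] at this
    simpa using norm_le_zero_iff.mp (by simpa using this)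
  set e := ContinuousLinearEquiv.ofBijective S hker hrange with he
  have heS : ∀ x, e x = S x := fun x => rfl
  refine ⟨e.symm.toContinuousLinearMap, ?_, ?_, ?_⟩
  · ext x
    simp only [coe_comp', Function.comp_apply, ContinuousLinearEquiv.coe_coe, one_apply]
    rw [← heS x]; exact e.symm_apply_apply x
  · ext x
    simp only [coe_comp', Function.comp_apply, ContinuousLinearEquiv.coe_coe, one_apply]
    rw [← heS (e.symm x)]; exact e.apply_symm_apply x
  · refine opNorm_le_bound _ zero_le_one fun y => ?_
    have : S (e.symm y) = y := by rw [← heS (e.symm y)]; exact e.apply_symm_apply y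
    calc ‖e.symm.toContinuousLinearMap y‖ ≤ ‖S (e.symm y)‖ := hb _
      _ = 1 * ‖y‖ := by rw [this, one_mul]

/-- the symplectic relations imply `S*S ≥ 1`, `SS* ≥ 1`, and `S` is bijective with
bounded inverse of norm at most `1`. -/
theorem stmt1 (Γ : H →ₛₗᵢ[starRingEnd ℂ] H) (hΓ : ∀ x, Γ (Γ x) = x)
    (S T : H →L[ℂ] H) (hsymp : SympRel Γ S T) :
    (adjoint S ∘L S - 1).IsPositive ∧ (S ∘L adjoint S - 1).IsPositive ∧
      ∃ Sinv : H →L[ℂ] H, Sinv ∘L S = 1 ∧ S ∘L Sinv = 1 ∧ ‖Sinv‖ ≤ 1 :=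
  stmt1aux Γ hΓ S T hsymp.1 hsymp.2.2.1
end
end

section
/- Suppose S and T are bounded operators on H satisfying the symplectic relations, so that S is boundedly invertible. Then Γ∘(T∘S⁻¹)*∘Γ = T∘S⁻¹, i.e. the operator K₁ = TS⁻¹ satisfies K̄₁* = K₁. -/
noncomputable section

open ContinuousLinearMap Filter
open scoped Topology

variable {H : Type*} [NormedAddCommGroup H] [InnerProductSpace ℂ H] [CompleteSpace H]

open scoped InnerProductSpace ComplexConjugate

lemma conj_inner_aux (Γ : H →ₛₗᵢ[starRingEnd ℂ] H) (x y : H) :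
    ⟪Γ x, Γ y⟫_ℂ = ⟪y, x⟫_ℂ := by
  have hI : ∀ z : H, Γ (Complex.I • z) = -(Complex.I • Γ z) := by
    intro z
    rw [map_smulₛₗ]
    simp [Complex.conj_I, neg_smul]
  have hre : (⟪Γ x, Γ y⟫_ℂ).re = (⟪x, y⟫_ℂ).re := by
    have h1 := re_inner_eq_norm_add_mul_self_sub_norm_sub_mul_self_div_four (𝕜 := ℂ) (Γ x) (Γ y)
    have h2 := re_inner_eq_norm_add_mul_self_sub_norm_sub_mul_self_div_four (𝕜 := ℂ) x y
    have e1 : ‖Γ x + Γ y‖ = ‖x + y‖ := by rw [← map_add]; exact Γ.norm_map _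
    have e2 : ‖Γ x - Γ y‖ = ‖x - y‖ := by rw [← map_sub]; exact Γ.norm_map _
    simp only [RCLike.re_to_complex] at h1 h2
    rw [h1, h2, e1, e2]
  have him : (⟪Γ x, Γ y⟫_ℂ).im = -(⟪x, y⟫_ℂ).im := by
    have h1 := im_inner_eq_norm_sub_i_smul_mul_self_sub_norm_add_i_smul_mul_self_div_four (𝕜 := ℂ) (Γ x) (Γ y)
    have h2 := im_inner_eq_norm_sub_i_smul_mul_self_sub_norm_add_i_smul_mul_self_div_four (𝕜 := ℂ) x y
    have e1 : ‖Γ x - Complex.I • Γ y‖ = ‖x + Complex.I • y‖ := by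
      rw [show Γ x - Complex.I • Γ y = Γ (x + Complex.I • y) by
        rw [map_add, hI]; abel]
      exact Γ.norm_map _
    have e2 : ‖Γ x + Complex.I • Γ y‖ = ‖x - Complex.I • y‖ := by
      rw [show Γ x + Complex.I • Γ y = Γ (x - Complex.I • y) by
        rw [map_sub, hI]; abel]
      exact Γ.norm_map _
    have hIK : (RCLike.I : ℂ) = Complex.I := rfl
    rw [hIK] at h1 h2
    simp only [RCLike.im_to_complex] at h1 h2
    rw [h1, h2, e1, e2]
    ring
  have hc := inner_conj_symm (𝕜 := ℂ) x y
  apply Complex.ext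
  · have hr := congrArg Complex.re hc
    simp only [Complex.conj_re] at hr
    rw [hre, ← hr]
  · have hi := congrArg Complex.im hc
    simp only [Complex.conj_im] at hi
    rw [him]; linarith

lemma conjOp_comp (Γ : H →ₛₗᵢ[starRingEnd ℂ] H) (hΓ : ∀ x, Γ (Γ x) = x)
    (A B : H →L[ℂ] H) : conjOp Γ (A ∘L B) = conjOp Γ A ∘L conjOp Γ B := by
  ext x; simp [conjOp, hΓ]

lemma conjOp_one (Γ : H →ₛₗᵢ[starRingEnd ℂ] H) (hΓ : ∀ x, Γ (Γ x) = x) :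
    conjOp Γ (1 : H →L[ℂ] H) = 1 := by
  ext x; simp [conjOp, hΓ]

lemma adjoint_conjOp (Γ : H →ₛₗᵢ[starRingEnd ℂ] H) (hΓ : ∀ x, Γ (Γ x) = x)
    (X : H →L[ℂ] H) : adjoint (conjOp Γ X) = conjOp Γ (adjoint X) := by
  symm
  rw [ContinuousLinearMap.eq_adjoint_iff]
  intro x y
  have l1 : ⟪conjOp Γ (adjoint X) x, y⟫_ℂ = ⟪Γ ((adjoint X) (Γ x)), Γ (Γ y)⟫_ℂ := by
    rw [hΓ]; rfl
  rw [l1, conj_inner_aux, ContinuousLinearMap.adjoint_inner_right]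
  have l2 : ⟪x, conjOp Γ X y⟫_ℂ = ⟪Γ (Γ x), Γ (X (Γ y))⟫_ℂ := by rw [hΓ]; rfl
  rw [l2, conj_inner_aux]

/-- under the symplectic relations, `K₁ = T S⁻¹` satisfies `Γ ∘ K₁* ∘ Γ = K₁`. -/
theorem stmt3 (Γ : H →ₛₗᵢ[starRingEnd ℂ] H) (hΓ : ∀ x, Γ (Γ x) = x)
    (S T : H →L[ℂ] H) (hsymp : SympRel Γ S T)
    (Sinv : H →L[ℂ] H) (hSinv₁ : Sinv ∘L S = 1) (hSinv₂ : S ∘L Sinv = 1) :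
    conjOp Γ (adjoint (T ∘L Sinv)) = T ∘L Sinv := by
  obtain ⟨-, h2, -, -⟩ := hsymp
  have h2' : adjoint (conjOp Γ S) ∘L T = adjoint (conjOp Γ T) ∘L S := by
    rwa [sub_eq_zero] at h2
  have hinv : adjoint (conjOp Γ Sinv) ∘L adjoint (conjOp Γ S) = 1 := by
    rw [← ContinuousLinearMap.adjoint_comp, ← conjOp_comp Γ hΓ, hSinv₂, conjOp_one Γ hΓ]
    exact ContinuousLinearMap.adjoint_id
  have key : adjoint (conjOp Γ Sinv) ∘L adjoint (conjOp Γ T) = T ∘L Sinv := by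
    have : adjoint (conjOp Γ T) = adjoint (conjOp Γ S) ∘L (T ∘L Sinv) := by
      calc adjoint (conjOp Γ T)
          = (adjoint (conjOp Γ T) ∘L S) ∘L Sinv := by
            rw [ContinuousLinearMap.comp_assoc, hSinv₂, ContinuousLinearMap.one_def, ContinuousLinearMap.comp_id]
        _ = adjoint (conjOp Γ S) ∘L (T ∘L Sinv) := by
            rw [← h2', ContinuousLinearMap.comp_assoc]
    rw [this, ← ContinuousLinearMap.comp_assoc, hinv, ContinuousLinearMap.one_def, ContinuousLinearMap.id_comp]
  rw [ContinuousLinearMap.adjoint_comp, conjOp_comp Γ hΓ, ← adjoint_conjOp Γ hΓ,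
    ← adjoint_conjOp Γ hΓ, key]
end
end

section
/- Let T be a bounded operator on a complex Hilbert space H. Then 1 + T*T is boundedly invertible, and ‖T∘(1 + T*T)⁻¹∘T*‖ ≤ ‖T‖²/(1 + ‖T‖²) < 1. -/
noncomputable section

open ContinuousLinearMap Filter
open scoped Topology

variable {H : Type*} [NormedAddCommGroup H] [InnerProductSpace ℂ H] [CompleteSpace H]

/-- `1 + T*T` is boundedly invertible and
`‖T (1 + T*T)⁻¹ T*‖ ≤ ‖T‖²/(1 + ‖T‖²) < 1`. -/
theorem stmt11 (T : H →L[ℂ] H) :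
    ∃ V : H →L[ℂ] H,
      V ∘L (1 + adjoint T ∘L T) = 1 ∧ (1 + adjoint T ∘L T) ∘L V = 1 ∧
      ‖T ∘L V ∘L adjoint T‖ ≤ ‖T‖ ^ 2 / (1 + ‖T‖ ^ 2) ∧
      ‖T‖ ^ 2 / (1 + ‖T‖ ^ 2) < 1 := by
  have hTT : (0 : H →L[ℂ] H) ≤ star T * T := star_mul_self_nonneg T
  have hS1 : (1 : H →L[ℂ] H) ≤ 1 + star T * T := le_add_of_nonneg_right hTT
  have hS : IsUnit (1 + star T * T) :=
    CStarAlgebra.isUnit_of_le 1 hS1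
  have hTT' : (0 : H →L[ℂ] H) ≤ T * star T := mul_star_self_nonneg T
  have hS1' : (1 : H →L[ℂ] H) ≤ 1 + T * star T := le_add_of_nonneg_right hTT'
  have hS' : IsUnit (1 + T * star T) :=
    CStarAlgebra.isUnit_of_le 1 hS1'
  obtain ⟨u, hu⟩ := hS
  obtain ⟨u', hu'⟩ := hS'
  set c : ℝ := ‖T‖ ^ 2 with hc
  have hc0 : (0:ℝ) ≤ c := sq_nonneg _
  have hr : (0:ℝ) < 1 + c := by positivity
  -- intertwining
  have hcomm : T * (1 + star T * T) = (1 + T * star T) * T := by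
    simp [mul_add, add_mul, mul_assoc]
  have h1 : (↑u' : H →L[ℂ] H) * (T * ↑u⁻¹) = T := by
    rw [← mul_assoc, hu', ← hcomm, ← hu, mul_assoc, Units.mul_inv, mul_one]
  have key : T * (↑u⁻¹ : H →L[ℂ] H) = ↑u'⁻¹ * T := by
    have := congrArg (fun x => (↑u'⁻¹ : H →L[ℂ] H) * x) h1
    simpa [← mul_assoc] using this
  have hA : T * (↑u⁻¹ : H →L[ℂ] H) * star T = 1 - ↑u'⁻¹ := by
    rw [key, mul_assoc]
    have h2 : (T * star T : H →L[ℂ] H) = ↑u' - 1 := by rw [hu']; abel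
    rw [h2, mul_sub, mul_one, Units.inv_mul]
  have hu'nn : (0 : H →L[ℂ] H) ≤ ↑u' := by rw [hu']; exact zero_le_one.trans hS1'
  have hWle1 : (↑u'⁻¹ : H →L[ℂ] H) ≤ 1 := by
    have := (CStarAlgebra.inv_le_one_iff_one_le (a := u') hu'nn).mpr
    exact this (by show (1 : H →L[ℂ] H) ≤ ↑u'; rw [hu']; exact hS1')
  -- upper bound for u'
  have hnorm : ‖(T * star T : H →L[ℂ] H)‖ = c := by
    rw [CStarRing.norm_self_mul_star, hc, sq]
  have hub : (↑u' : H →L[ℂ] H) ≤ algebraMap ℝ (H →L[ℂ] H) (1 + c) := by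
    rw [hu', map_add, map_one]
    have h3 : (T * star T : H →L[ℂ] H) ≤ algebraMap ℝ (H →L[ℂ] H) ‖(T * star T : H →L[ℂ] H)‖ :=
      IsSelfAdjoint.le_algebraMap_norm_self (.of_nonneg hTT')
    rw [hnorm] at h3
    exact add_le_add_right h3 1
  obtain ⟨v, hvv⟩ : IsUnit (algebraMap ℝ (H →L[ℂ] H) (1 + c)) :=
    (isUnit_iff_ne_zero.2 hr.ne').map (algebraMap ℝ (H →L[ℂ] H))
  have hvinv : (↑v⁻¹ : H →L[ℂ] H) = algebraMap ℝ (H →L[ℂ] H) (1 + c)⁻¹ :=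
    Units.inv_eq_of_mul_eq_one_left (by
      rw [hvv, ← map_mul, inv_mul_cancel₀ hr.ne', map_one])
  have hge : (↑v⁻¹ : H →L[ℂ] H) ≤ ↑u'⁻¹ :=
    CStarAlgebra.inv_le_inv hu'nn (by rw [hvv]; exact hub)
  have hAle : T * (↑u⁻¹ : H →L[ℂ] H) * star T ≤ algebraMap ℝ (H →L[ℂ] H) (c / (1 + c)) := by
    rw [hA]
    calc (1 : H →L[ℂ] H) - ↑u'⁻¹ ≤ 1 - ↑v⁻¹ := sub_le_sub_left hge 1
      _ = algebraMap ℝ (H →L[ℂ] H) (c / (1 + c)) := by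
          rw [hvinv, ← map_one (algebraMap ℝ (H →L[ℂ] H)), ← map_sub]
          congr 1
          field_simp
          ring
  have hAnn : (0 : H →L[ℂ] H) ≤ T * ↑u⁻¹ * star T := by
    rw [hA]; exact sub_nonneg.mpr hWle1
  have hnormA : ‖T * (↑u⁻¹ : H →L[ℂ] H) * star T‖ ≤ c / (1 + c) :=
    (CStarAlgebra.norm_le_iff_le_algebraMap _ (div_nonneg hc0 hr.le) hAnn).mpr hAle
  refine ⟨↑u⁻¹, ?_, ?_, ?_, ?_⟩
  · show (↑u⁻¹ * (1 + star T * T) : H →L[ℂ] H) = 1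
    rw [← hu, Units.inv_mul]
  · show ((1 + star T * T) * ↑u⁻¹ : H →L[ℂ] H) = 1
    rw [← hu, Units.mul_inv]
  · exact hnormA
  · rw [div_lt_one hr]; exact lt_one_add c
end
end

section
/- Let S, T be bounded operators on H and let Â be the block operator Â(φ,ψ) = (Sφ + T̄ψ, Tφ + S̄ψ) on H ⊕ H. Then for every t ∈ ℝ the exponential exp(tÂ) has the same block symmetry: (exp(tÂ))₂₂ = Γ∘(exp(tÂ))₁₁∘Γ and (exp(tÂ))₁₂ = Γ∘(exp(tÂ))₂₁∘Γ. -/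
noncomputable section

open ContinuousLinearMap Filter
open scoped Topology

variable {H : Type*} [NormedAddCommGroup H] [InnerProductSpace ℂ H] [CompleteSpace H]

set_option linter.unusedSectionVars false
set_option synthInstance.maxHeartbeats 1000000
set_option maxHeartbeats 1000000
section Aux

variable {H : Type*} [NormedAddCommGroup H] [InnerProductSpace ℂ H] [CompleteSpace H]

@[simp] lemma proj1_mk2 (a b : H) : proj1 (mk2 a b) = a := rfl
@[simp] lemma proj2_mk2 (a b : H) : proj2 (mk2 a b) = b := rfl
lemma mk2_proj (x : H2 H) : mk2 (proj1 x) (proj2 x) = x := rfl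
lemma mk2_add (a b c d : H) : mk2 (a + c) (b + d) = mk2 a b + mk2 c d := rfl
lemma mk2_smul (r : ℝ) (a b : H) : mk2 (r • a) (r • b) = r • mk2 a b := rfl

lemma Gamma_real_smul (Γ : H →ₛₗᵢ[starRingEnd ℂ] H) (r : ℝ) (y : H) :
    Γ (r • y) = r • Γ y := by
  rw [← Complex.coe_smul, map_smulₛₗ, Complex.conj_ofReal, Complex.coe_smul]

/-- The conjugation `J (φ, ψ) = (Γ ψ, Γ φ)` on `H ⊕ H`, as a real-linear map. -/
def Jmap (Γ : H →ₛₗᵢ[starRingEnd ℂ] H) : H2 H →L[ℝ] H2 H where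
  toFun x := mk2 (Γ (proj2 x)) (Γ (proj1 x))
  map_add' x y := by simp only [map_add, mk2_add]
  map_smul' r x := by
    simp only [RingHom.id_apply, map_smul_of_tower, Gamma_real_smul, mk2_smul]
  cont := by
    show Continuous fun x : H2 H => mk2 (Γ (proj2 x)) (Γ (proj1 x))
    have h : (fun x : H2 H => mk2 (Γ (proj2 x)) (Γ (proj1 x))) =
        (WithLp.prodContinuousLinearEquiv 2 ℂ H H).symm ∘
          fun x => (Γ (proj2 x), Γ (proj1 x)) := rfl
    rw [h]
    exact (WithLp.prodContinuousLinearEquiv 2 ℂ H H).symm.continuous.comp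
      ((Γ.continuous.comp (proj2 : H2 H →L[ℂ] H).continuous).prodMk
        (Γ.continuous.comp (proj1 : H2 H →L[ℂ] H).continuous))

lemma Jmap_apply (Γ : H →ₛₗᵢ[starRingEnd ℂ] H) (x : H2 H) :
    Jmap Γ x = mk2 (Γ (proj2 x)) (Γ (proj1 x)) := rfl

end Aux

/-- `exp(tÂ)` has the block symmetry `(exp(tÂ))₂₂ = Γ (exp(tÂ))₁₁ Γ` and
`(exp(tÂ))₁₂ = Γ (exp(tÂ))₂₁ Γ`. -/
theorem stmt16 (Γ : H →ₛₗᵢ[starRingEnd ℂ] H) (hΓ : ∀ x, Γ (Γ x) = x)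
    (S T : H →L[ℂ] H) (Ahat : H2 H →L[ℂ] H2 H)
    (hA : ∀ φ ψ : H,
      Ahat (mk2 φ ψ) = mk2 (S φ + conjOp Γ T ψ) (T φ + conjOp Γ S ψ)) :
    ∀ t : ℝ,
      blk22 (NormedSpace.exp (t • Ahat)) =
        conjOp Γ (blk11 (NormedSpace.exp (t • Ahat))) ∧
      blk12 (NormedSpace.exp (t • Ahat)) =
        conjOp Γ (blk21 (NormedSpace.exp (t • Ahat))) := by
  -- J commutes with Ahat
  have hJA : ∀ x, Jmap Γ (Ahat x) = Ahat (Jmap Γ x) := by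
    intro x
    rw [← mk2_proj x]
    set φ := proj1 x
    set ψ := proj2 x
    rw [hA, Jmap_apply, Jmap_apply, proj1_mk2, proj2_mk2, proj1_mk2, proj2_mk2, hA]
    simp only [conjOp, ContinuousLinearMap.comp_apply, LinearIsometry.coe_toContinuousLinearMap,
      map_add, hΓ]
    rw [add_comm (Γ (S φ)), add_comm (Γ (T φ))]
  intro t
  set B := t • Ahat with hBdef
  have hJB : ∀ x, Jmap Γ (B x) = B (Jmap Γ x) := by
    intro x
    rw [hBdef]
    simp only [ContinuousLinearMap.smul_apply, map_smul, hJA]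
  have hJBn : ∀ (n : ℕ) (x), Jmap Γ ((B ^ n) x) = (B ^ n) (Jmap Γ x) := by
    intro n
    induction n with
    | zero => intro x; simp
    | succ n ih =>
      intro x
      rw [pow_succ, ContinuousLinearMap.mul_apply, ContinuousLinearMap.mul_apply, ih, hJB]
  have hsum : Summable fun n : ℕ => ((Nat.factorial n : ℂ))⁻¹ • B ^ n :=
    NormedSpace.expSeries_summable' (𝕂 := ℂ) B
  have happ : ∀ y, NormedSpace.exp B y = ∑' n : ℕ, ((Nat.factorial n : ℂ))⁻¹ • ((B ^ n) y) := by
    intro y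
    rw [NormedSpace.exp_eq_tsum (𝕂 := ℂ)]
    have := (ContinuousLinearMap.apply ℂ (H2 H) y).map_tsum hsum
    simpa using this
  have hsum' : ∀ y, Summable fun n : ℕ => ((Nat.factorial n : ℂ))⁻¹ • ((B ^ n) y) := by
    intro y
    have := hsum.map (ContinuousLinearMap.apply ℂ (H2 H) y).toLinearMap.toAddMonoidHom
      (ContinuousLinearMap.apply ℂ (H2 H) y).continuous
    simpa [Function.comp_def] using this
  have hcoef : ∀ n : ℕ, ((Nat.factorial n : ℂ))⁻¹ = ((((Nat.factorial n : ℝ))⁻¹ : ℝ) : ℂ) := by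
    intro n; push_cast; ring
  have key : ∀ x, Jmap Γ (NormedSpace.exp B x) = NormedSpace.exp B (Jmap Γ x) := by
    intro x
    rw [happ, happ, (Jmap Γ).map_tsum (hsum' x)]
    refine tsum_congr fun n => ?_
    rw [hcoef, Complex.coe_smul, Complex.coe_smul, map_smul, hJBn]
  set E := NormedSpace.exp B with hE
  have main : ∀ f : H, E (mk2 0 f) = mk2 (Γ (proj2 (E (mk2 (Γ f) 0)))) (Γ (proj1 (E (mk2 (Γ f) 0)))) := by
    intro f
    have h1 : Jmap Γ (mk2 (Γ f) 0) = mk2 0 f := by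
      rw [Jmap_apply, proj1_mk2, proj2_mk2, map_zero, hΓ]
    rw [← h1, ← key, Jmap_apply]
  constructor
  · ext f
    have := congrArg proj2 (main f)
    rw [proj2_mk2] at this
    simpa [blk22, blk11, conjOp, inc1, inc2, proj1, proj2, mk2] using this
  · ext f
    have := congrArg proj1 (main f)
    rw [proj1_mk2] at this
    simpa [blk12, blk21, conjOp, inc1, inc2, proj1, proj2, mk2] using this
end
end
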